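/- The number of numerical semigroups of genus g is at most the Catalan number C_g = (1/(g+1))·C(2g, g). -/

import Mathlib

open DyckStep List

open scoped Classical in
/-- Number of elements of `Λ` in `[1, n]`. -/
noncomputable def nsCount (Λ : Set ℕ) (n : ℕ) : ℕ :=
  ((Finset.range n).filter (fun j => j + 1 ∈ Λ)).card

open scoped Classical in
lemma nsCount_succ (Λ : Set ℕ) (n : ℕ) :
    nsCount Λ (n + 1) = nsCount Λ n + (if n + 1 ∈ Λ then 1 else 0) := by
  unfold nsCount
  rw [Finset.range_add_one, Finset.filter_insert]
  split <;> simp [Finset.card_insert_of_notMem]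

lemma nsCount_le (Λ : Set ℕ) (n : ℕ) : nsCount Λ n ≤ n := by
  classical
  exact le_trans (Finset.card_filter_le _ _) (by simp)

section Main

variable {Λ : Set ℕ} {g : ℕ}

/-- Every gap is at most `2g - 1`. -/
lemma ns_gap_lt (h0 : 0 ∈ Λ) (hadd : ∀ a b, a ∈ Λ → b ∈ Λ → a + b ∈ Λ)
    (hfin : Λᶜ.Finite) (hg : Λᶜ.ncard = g) (n : ℕ) (hn : n ∉ Λ) : n < 2 * g := by
  classical
  have hn1 : 1 ≤ n := by
    rcases Nat.eq_zero_or_pos n with h | h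
    · exact absurd (h ▸ h0) hn
    · exact h
  -- injection from Icc 1 (n/2) into the gap set minus n
  set G : Finset ℕ := hfin.toFinset with hG
  have hnG : n ∈ G := by simp [hG, hn]
  have hcard : G.card = g := by
    rw [← hg, Set.ncard_eq_toFinset_card _ hfin]
  set ψ : ℕ → ℕ := fun a => if a ∈ Λ then n - a else a with hψ
  have hmaps : ∀ a ∈ Finset.Icc 1 (n / 2), ψ a ∈ G.erase n := by
    intro a ha
    simp only [Finset.mem_Icc] at ha
    have ha2 : 2 * a ≤ n := by omega
    simp only [hψ]
    split
    · rename_i haΛ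
      have hgap : n - a ∉ Λ := fun hc => hn (by
        have := hadd a (n - a) haΛ hc
        rwa [Nat.add_sub_cancel' (by omega)] at this)
      simp only [Finset.mem_erase, hG, Set.Finite.mem_toFinset, Set.mem_compl_iff]
      exact ⟨by omega, hgap⟩
    · rename_i haΛ
      simp only [Finset.mem_erase, hG, Set.Finite.mem_toFinset, Set.mem_compl_iff]
      exact ⟨by omega, haΛ⟩
  have hinj : Set.InjOn ψ (Finset.Icc 1 (n / 2)) := by
    intro a ha b hb hab
    simp only [Finset.coe_Icc, Set.mem_Icc] at ha hb
    simp only [hψ] at hab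
    by_cases haΛ : a ∈ Λ <;> by_cases hbΛ : b ∈ Λ <;> simp [haΛ, hbΛ] at hab
    · omega
    · -- n - a = b with a ∈ Λ, b ∉ Λ : forces a = b
      have : a = b := by omega
      exact absurd (this ▸ haΛ) hbΛ
    · have : a = b := by omega
      exact absurd (this ▸ hbΛ) haΛ
    · exact hab
  have hle := Finset.card_le_card_of_injOn ψ hmaps hinj
  have h1 : (Finset.Icc 1 (n / 2)).card = n / 2 := by
    rw [Nat.card_Icc]; omega
  have h2 : (G.erase n).card = g - 1 := by
    rw [Finset.card_erase_of_mem hnG, hcard]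
  have hg1 : 1 ≤ g := hcard ▸ Finset.card_pos.mpr ⟨n, hnG⟩
  rw [h1, h2] at hle
  omega

open scoped Classical in
/-- The Dyck-path property: in `[1, n]` with `n ≤ 2g`, there are at least as many
gaps as nongaps. -/
lemma ns_dyck (h0 : 0 ∈ Λ) (hadd : ∀ a b, a ∈ Λ → b ∈ Λ → a + b ∈ Λ)
    (hfin : Λᶜ.Finite) (hg : Λᶜ.ncard = g) (n : ℕ) (hn : n ≤ 2 * g) : 2 * nsCount Λ n ≤ n := by
  by_contra hcon
  push_neg at hcon
  set k := nsCount Λ n with hk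
  -- every m > n is in Λ
  have key : ∀ m, n < m → m ∈ Λ := by
    intro m
    induction m using Nat.strong_induction_on with
    | _ m ih =>
      intro hm
      set B : Finset ℕ := (Finset.Icc 1 (m - 1)).filter (fun a => a ∈ Λ) with hB
      have hBsub : ∀ a ∈ B, 1 ≤ a ∧ a ≤ m - 1 ∧ a ∈ Λ := by
        intro a ha
        simp only [hB, Finset.mem_filter, Finset.mem_Icc] at ha
        tauto
      -- B contains the nongaps ≤ n and everything in (n, m-1]
      have hBcard : k + (m - 1 - n) ≤ B.card := by
        have hsub : ((Finset.range n).filter (fun j => j + 1 ∈ Λ)).image (· + 1)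
            ∪ Finset.Icc (n + 1) (m - 1) ⊆ B := by
          intro x hx
          rcases Finset.mem_union.mp hx with hx | hx
          · obtain ⟨j, hj, rfl⟩ := Finset.mem_image.mp hx
            simp only [Finset.mem_filter, Finset.mem_range] at hj
            simp only [hB, Finset.mem_filter, Finset.mem_Icc]
            exact ⟨⟨by omega, by omega⟩, hj.2⟩
          · simp only [Finset.mem_Icc] at hx
            simp only [hB, Finset.mem_filter, Finset.mem_Icc]
            exact ⟨⟨by omega, hx.2⟩, ih x (by omega) (by omega)⟩
        have hdisj : Disjoint (((Finset.range n).filter (fun j => j + 1 ∈ Λ)).image (· + 1))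
            (Finset.Icc (n + 1) (m - 1)) := by
          rw [Finset.disjoint_left]
          intro x hx hx'
          obtain ⟨j, hj, rfl⟩ := Finset.mem_image.mp hx
          simp only [Finset.mem_filter, Finset.mem_range] at hj
          simp only [Finset.mem_Icc] at hx'
          omega
        have := Finset.card_le_card hsub
        rw [Finset.card_union_of_disjoint hdisj,
          Finset.card_image_of_injective _ (add_left_injective 1), Nat.card_Icc] at this
        have h3 : ((Finset.range n).filter (fun j => j + 1 ∈ Λ)).card = k := rfl
        omega
      set C : Finset ℕ := B.image (fun a => m - a) with hC
      have hCcard : C.card = B.card := by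
        rw [hC]
        apply Finset.card_image_of_injOn
        intro a ha b hb hab
        obtain ⟨ha1, ha2, -⟩ := hBsub a ha
        obtain ⟨hb1, hb2, -⟩ := hBsub b hb
        dsimp only at hab
        omega
      have hBI : B ⊆ Finset.Icc 1 (m - 1) := Finset.filter_subset _ _
      have hCI : C ⊆ Finset.Icc 1 (m - 1) := by
        intro x hx
        obtain ⟨a, ha, rfl⟩ := Finset.mem_image.mp hx
        obtain ⟨ha1, ha2, -⟩ := hBsub a ha
        simp only [Finset.mem_Icc]; omega
      have hnonempty : (B ∩ C).Nonempty := by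
        rw [Finset.nonempty_iff_ne_empty]
        intro hempty
        have hdisj : Disjoint B C := Finset.disjoint_iff_inter_eq_empty.mpr hempty
        have h1 : (B ∪ C).card = B.card + C.card := Finset.card_union_of_disjoint hdisj
        have h2 : (B ∪ C).card ≤ m - 1 := by
          have := Finset.card_le_card (Finset.union_subset hBI hCI)
          simpa [Nat.card_Icc] using this
        omega
      obtain ⟨x, hx⟩ := hnonempty
      rw [Finset.mem_inter] at hx
      obtain ⟨a, ha, hax⟩ := Finset.mem_image.mp hx.2
      obtain ⟨-, -, hxΛ⟩ := hBsub x hx.1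
      obtain ⟨ha1, ha2, haΛ⟩ := hBsub a ha
      have : a + x = m := by omega
      exact this ▸ hadd a x haΛ hxΛ
  -- now all gaps are in [1, n], so g ≤ n - k, contradiction
  have hsub : Λᶜ ⊆ ↑(((Finset.range n).filter (fun j => j + 1 ∉ Λ)).image (· + 1)) := by
    intro x hx
    simp only [Set.mem_compl_iff] at hx
    have hx1 : 1 ≤ x := by
      rcases Nat.eq_zero_or_pos x with h | h
      · exact absurd (h ▸ h0) hx
      · exact h
    have hxn : x ≤ n := by
      by_contra hc
      exact hx (key x (by omega))
    simp only [Finset.coe_image, Set.mem_image, Finset.mem_coe, Finset.mem_filter,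
      Finset.mem_range]
    exact ⟨x - 1, ⟨by omega, by rwa [Nat.sub_add_cancel hx1]⟩, Nat.sub_add_cancel hx1⟩
  have hgle : g ≤ n - k := by
    have h1 := Set.ncard_le_ncard hsub (Finset.finite_toSet _)
    rw [hg, Set.ncard_coe_finset,
      Finset.card_image_of_injective _ (add_left_injective 1)] at h1
    have h2 := Finset.card_filter_add_card_filter_not (s := Finset.range n)
      (p := fun j => j + 1 ∈ Λ)
    simp only [Finset.card_range] at h2
    have h3 : ((Finset.range n).filter (fun j => j + 1 ∈ Λ)).card = k := rfl
    omega
  have := nsCount_le Λ n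
  omega

open scoped Classical in
lemma ns_count_2g (h0 : 0 ∈ Λ) (hadd : ∀ a b, a ∈ Λ → b ∈ Λ → a + b ∈ Λ)
    (hfin : Λᶜ.Finite) (hg : Λᶜ.ncard = g) : nsCount Λ (2 * g) = g := by
  have hGeq : hfin.toFinset = ((Finset.range (2 * g)).filter (fun j => j + 1 ∉ Λ)).image
      (· + 1) := by
    ext x
    simp only [Set.Finite.mem_toFinset, Set.mem_compl_iff, Finset.mem_image, Finset.mem_filter,
      Finset.mem_range]
    constructor
    · intro hx
      have hx1 : 1 ≤ x := by
        rcases Nat.eq_zero_or_pos x with h | h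
        · exact absurd (h ▸ h0) hx
        · exact h
      have := ns_gap_lt h0 hadd hfin hg x hx
      exact ⟨x - 1, ⟨by omega, by rwa [Nat.sub_add_cancel hx1]⟩, Nat.sub_add_cancel hx1⟩
    · rintro ⟨j, ⟨-, hj⟩, rfl⟩
      exact hj
  have hcard : ((Finset.range (2 * g)).filter (fun j => j + 1 ∉ Λ)).card = g := by
    have := congrArg Finset.card hGeq
    rw [Finset.card_image_of_injective _ (add_left_injective 1)] at this
    rw [← this, ← hg, Set.ncard_eq_toFinset_card _ hfin]
  have h2 := Finset.card_filter_add_card_filter_not (s := Finset.range (2 * g))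
    (p := fun j => j + 1 ∈ Λ)
  simp only [Finset.card_range] at h2
  unfold nsCount
  omega

end Main

open scoped Classical in
/-- The step function of the square-diagram path of a numerical semigroup. -/
noncomputable def nsStep (Λ : Set ℕ) (j : ℕ) : DyckStep :=
  if j + 1 ∈ Λ then D else U

open scoped Classical in
lemma ns_count_D (Λ : Set ℕ) (n : ℕ) :
    ((List.range n).map (nsStep Λ)).count D = nsCount Λ n := by
  induction n with
  | zero => simp [nsCount]
  | succ n ih =>
    rw [List.range_succ, List.map_append, List.count_append, ih, nsCount_succ]
    simp only [List.map_cons, List.map_nil, nsStep]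
    split <;> simp

open scoped Classical in
lemma ns_count_U (Λ : Set ℕ) (n : ℕ) :
    ((List.range n).map (nsStep Λ)).count U = n - nsCount Λ n := by
  induction n with
  | zero => simp [nsCount]
  | succ n ih =>
    rw [List.range_succ, List.map_append, List.count_append, ih, nsCount_succ]
    simp only [List.map_cons, List.map_nil, nsStep]
    have := nsCount_le Λ n
    split <;> simp <;> omega

/-- An explicit "chain" binary tree with `n` internal nodes, used to show `0 < catalan n`. -/
def nsChainTree : ℕ → Tree Unit
  | 0 => Tree.nil
  | n + 1 => Tree.node () (nsChainTree n) Tree.nil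

lemma nsChainTree_numNodes (n : ℕ) : (nsChainTree n).numNodes = n := by
  induction n with
  | zero => rfl
  | succ n ih => simp [nsChainTree, Tree.numNodes, ih]

lemma ns_catalan_pos (n : ℕ) : 0 < catalan n := by
  rw [← BinaryTree.treesOfNumNodesEq_card_eq_catalan]
  exact Finset.card_pos.mpr ⟨nsChainTree n, by
    rw [BinaryTree.mem_treesOfNumNodesEq]; exact nsChainTree_numNodes n⟩

/-- The number of numerical semigroups of genus g is at most the
Catalan number C_g. -/
theorem card_numerical_semigroups_le_catalan (g : ℕ) :
    {Λ : Set ℕ | 0 ∈ Λ ∧ (∀ a b, a ∈ Λ → b ∈ Λ → a + b ∈ Λ) ∧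
        Λᶜ.Finite ∧ Λᶜ.ncard = g}.ncard ≤ catalan g := by
  classical
  set S := {Λ : Set ℕ | 0 ∈ Λ ∧ (∀ a b, a ∈ Λ → b ∈ Λ → a + b ∈ Λ) ∧
      Λᶜ.Finite ∧ Λᶜ.ncard = g} with hS
  have hne : Nonempty { p : DyckWord // p.semilength = g } := by
    rw [← Fintype.card_pos_iff, DyckWord.card_dyckWord_semilength_eq_catalan]
    exact ns_catalan_pos g
  -- construct the Dyck word of a numerical semigroup
  have hword : ∀ Λ ∈ S, ∃ p : { p : DyckWord // p.semilength = g },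
      (p : DyckWord).toList = (List.range (2 * g)).map (nsStep Λ) := by
    intro Λ hΛ
    obtain ⟨h0, hadd, hfin, hg⟩ := hΛ
    have hk := ns_count_2g h0 hadd hfin hg
    refine ⟨⟨⟨(List.range (2 * g)).map (nsStep Λ), ?_, ?_⟩, ?_⟩, rfl⟩
    · rw [ns_count_D, ns_count_U, hk]; omega
    · intro i
      rw [← List.map_take, List.take_range, ns_count_D, ns_count_U]
      have := ns_dyck h0 hadd hfin hg (min i (2 * g)) (min_le_right _ _)
      omega
    · show ((List.range (2 * g)).map (nsStep Λ)).count U = g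
      rw [ns_count_U, hk]; omega
  choose F hF using hword
  set G : Set ℕ → { p : DyckWord // p.semilength = g } :=
    fun Λ => if h : Λ ∈ S then F Λ h else Classical.choice hne with hG
  have hinj : Set.InjOn G S := by
    intro Λ₁ h₁ Λ₂ h₂ heq
    simp only [hG, dif_pos h₁, dif_pos h₂] at heq
    have hlist : (List.range (2 * g)).map (nsStep Λ₁) = (List.range (2 * g)).map (nsStep Λ₂) := by
      rw [← hF Λ₁ h₁, ← hF Λ₂ h₂, heq]
    have hstep : ∀ j < 2 * g, (j + 1 ∈ Λ₁ ↔ j + 1 ∈ Λ₂) := by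
      intro j hj
      have := congrArg (fun l => l.getD j U) hlist
      simp only [List.getD_eq_getElem?_getD, List.getElem?_map, List.getElem?_range hj] at this
      simp only [Option.map_some, Option.getD_some, nsStep] at this
      by_cases h1 : j + 1 ∈ Λ₁ <;> by_cases h2 : j + 1 ∈ Λ₂ <;>
        simp [h1, h2] at this ⊢
    obtain ⟨h01, hadd1, hfin1, hg1⟩ := h₁
    obtain ⟨h02, hadd2, hfin2, hg2⟩ := h₂
    ext x
    rcases Nat.eq_zero_or_pos x with rfl | hx
    · simp [h01, h02]
    by_cases hx2 : 2 * g ≤ x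
    · constructor <;> intro
      · by_contra hc
        have := ns_gap_lt h02 hadd2 hfin2 hg2 x hc; omega
      · by_contra hc
        have := ns_gap_lt h01 hadd1 hfin1 hg1 x hc; omega
    · have := hstep (x - 1) (by omega)
      rw [Nat.sub_add_cancel hx] at this
      exact this
  have hmaps : ∀ Λ ∈ S, G Λ ∈ (Set.univ : Set { p : DyckWord // p.semilength = g }) :=
    fun _ _ => Set.mem_univ _
  have := Set.ncard_le_ncard_of_injOn G hmaps hinj Set.finite_univ
  rwa [Set.ncard_univ, Nat.card_eq_fintype_card,
    DyckWord.card_dyckWord_semilength_eq_catalan] at this
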